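/- For a process (X_n^I) adapted to a filtration G, the following are equivalent: (i) (X_n^I) is partially G-c.i.d.; (ii) for every j ∈ I and bounded measurable f, the process (E[f(X_{n+1,j}) | G_n^j])_{n≥0} is a martingale with respect to the filtration G^j = (G_n^j); (iii) for every n ≥ 0, j ∈ I, and every finite G-stopping time τ with τ ≥ n, (X_{n+1}^{I\{j}}, X_{τ+1,j}) =_d (X_{n+1}^{I\{j}}, X_{n+1,j}). -/

import Mathlib

open MeasureTheory ProbabilityTheory Filter
open scoped ENNReal NNReal Topology

/-- The enlarged σ-algebra `G_n^j = G_n ∨ σ(X_{n+1,i} : i ≠ j)`.  With the `0`-based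
convention `X n i` is the `(n+1)`-st observation of column `i`, so the concomitant
variables of row `n` (paper row `n+1`) are `X n i`, `i ≠ j`. -/
def enlargedSigma {Ω E I : Type*} {mΩ : MeasurableSpace Ω} [MeasurableSpace E]
    (ℱ : MeasureTheory.Filtration ℕ mΩ) (X : ℕ → I → Ω → E) (j : I) (n : ℕ) :
    MeasurableSpace Ω :=
  ℱ n ⊔ ⨆ (i : I) (_ : i ≠ j), MeasurableSpace.comap (X n i) inferInstance

section Aux

variable {Ω E I : Type*} {mΩ : MeasurableSpace Ω} [MeasurableSpace E]
    (ℱ : Filtration ℕ mΩ) (X : ℕ → I → Ω → E)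

theorem aux_measX (hadapt : ∀ n i, Measurable[ℱ (n + 1)] (X n i)) (n : ℕ) (i : I) :
    Measurable (X n i) :=
  (hadapt n i).mono (ℱ.le (n + 1)) le_rfl

theorem aux_es_le (hadapt : ∀ n i, Measurable[ℱ (n + 1)] (X n i)) (j : I) (n : ℕ) :
    enlargedSigma ℱ X j n ≤ mΩ := by
  refine sup_le (ℱ.le n) (iSup_le fun i => iSup_le fun _ => ?_)
  exact measurable_iff_comap_le.mp (aux_measX ℱ X hadapt n i)

theorem aux_es_mono (hadapt : ∀ n i, Measurable[ℱ (n + 1)] (X n i)) (j : I) :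
    ∀ {n m : ℕ}, n ≤ m → enlargedSigma ℱ X j n ≤ enlargedSigma ℱ X j m := by
  intro n m hnm
  rcases eq_or_lt_of_le hnm with rfl | hlt
  · exact le_rfl
  refine sup_le ((ℱ.mono hnm).trans le_sup_left)
    (iSup_le fun i => iSup_le fun _ => ?_)
  have h1 : MeasurableSpace.comap (X n i) inferInstance ≤ ℱ (n + 1) :=
    measurable_iff_comap_le.mp (hadapt n i)
  exact h1.trans ((ℱ.mono hlt).trans le_sup_left)

theorem aux_intbl {β : Type*} [MeasurableSpace β] (P : Measure Ω) [IsProbabilityMeasure P]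
    {f : β → ℝ} (hf : Measurable f)
    {C : ℝ} (hC : ∀ x, |f x| ≤ C) {g : Ω → β} (hg : Measurable g) :
    Integrable (fun ω => f (g ω)) P := by
  refine Integrable.mono' (integrable_const C) ((hf.comp hg).aestronglyMeasurable) ?_
  exact Eventually.of_forall fun ω => by simpa [Real.norm_eq_abs] using hC (g ω)

theorem aux_st_le {τ : Ω → ℕ} (hτ : IsStoppingTime ℱ (fun ω => (τ ω : WithTop ℕ)))
    (m : ℕ) : MeasurableSet[ℱ m] {ω | τ ω ≤ m} := by
  simpa using hτ m

theorem aux_st_of {τ : Ω → ℕ} (h : ∀ m : ℕ, MeasurableSet[ℱ m] {ω | τ ω ≤ m}) :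
    IsStoppingTime ℱ (fun ω => (τ ω : WithTop ℕ)) := fun m => by
  simpa using h m

theorem aux_meas_tau {τ : Ω → ℕ} (hτ : IsStoppingTime ℱ (fun ω => (τ ω : WithTop ℕ))) : Measurable τ := by
  refine measurable_to_countable fun y => ?_
  have : τ ⁻¹' {τ y} = {ω | τ ω = τ y} := rfl
  rw [this]
  exact (ℱ.le (τ y)) _ (by simpa using hτ.measurableSet_eq (τ y))

theorem aux_meas_Xtau (hadapt : ∀ n i, Measurable[ℱ (n + 1)] (X n i)) (j : I)
    {τ : Ω → ℕ} (hτ : Measurable τ) :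
    Measurable (fun ω => X (τ ω) j ω) := by
  intro B hB
  have : (fun ω => X (τ ω) j ω) ⁻¹' B = ⋃ m, ({ω | τ ω = m} ∩ (X m j) ⁻¹' B) := by
    ext ω
    simp only [Set.mem_preimage, Set.mem_iUnion, Set.mem_inter_iff, Set.mem_setOf_eq]
    constructor
    · intro h; exact ⟨τ ω, rfl, h⟩
    · rintro ⟨m, hm, h⟩; rw [hm]; exact h
  rw [this]
  exact MeasurableSet.iUnion fun m =>
    (hτ (measurableSet_singleton m)).inter (aux_measX ℱ X hadapt m j hB)

/-- The joint concomitant map. -/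
def concom (X : ℕ → I → Ω → E) (j : I) (n : ℕ) : Ω → ({i : I // i ≠ j} → E) :=
  fun ω i => X n i.1 ω

theorem aux_meas_concom (hadapt : ∀ n i, Measurable[ℱ (n + 1)] (X n i)) (j : I) (n : ℕ) :
    Measurable (concom X j n) :=
  measurable_pi_lambda _ fun i => ((hadapt n i.1).mono (ℱ.le (n + 1)) le_rfl)

/-- Generating π-system for `enlargedSigma`. -/
def esPi (ℱ : Filtration ℕ mΩ) (X : ℕ → I → Ω → E) (j : I) (n : ℕ) : Set (Set Ω) :=
  {C | ∃ A S, MeasurableSet[ℱ n] A ∧ MeasurableSet S ∧ C = A ∩ concom X j n ⁻¹' S}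

theorem aux_isPiSystem (j : I) (n : ℕ) : IsPiSystem (esPi ℱ X j n) := by
  rintro _ ⟨A₁, S₁, hA₁, hS₁, rfl⟩ _ ⟨A₂, S₂, hA₂, hS₂, rfl⟩ _
  exact ⟨A₁ ∩ A₂, S₁ ∩ S₂, hA₁.inter hA₂, hS₁.inter hS₂, by
    ext ω; simp [Set.mem_inter_iff]; tauto⟩

theorem aux_comap_concom (j : I) (n : ℕ) :
    MeasurableSpace.comap (concom X j n) MeasurableSpace.pi
      = ⨆ (i : I) (_ : i ≠ j), MeasurableSpace.comap (X n i) inferInstance := by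
  rw [MeasurableSpace.pi, MeasurableSpace.comap_iSup]
  rw [iSup_subtype']
  congr 1
  ext i
  rw [MeasurableSpace.comap_comp]
  exact Iff.rfl

theorem aux_generateFrom (j : I) (n : ℕ) :
    enlargedSigma ℱ X j n = MeasurableSpace.generateFrom (esPi ℱ X j n) := by
  apply le_antisymm
  · refine sup_le ?_ ?_
    · intro A hA
      have : A = A ∩ concom X j n ⁻¹' Set.univ := by simp
      rw [this]
      exact MeasurableSpace.measurableSet_generateFrom ⟨A, Set.univ, hA, MeasurableSet.univ, rfl⟩
    · rw [← aux_comap_concom X j n]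
      rintro _ ⟨S, hS, rfl⟩
      have : concom X j n ⁻¹' S = Set.univ ∩ concom X j n ⁻¹' S := by simp
      rw [this]
      exact MeasurableSpace.measurableSet_generateFrom
        ⟨Set.univ, S, MeasurableSet.univ, hS, rfl⟩
  · refine MeasurableSpace.generateFrom_le ?_
    rintro _ ⟨A, S, hA, hS, rfl⟩
    refine MeasurableSet.inter ?_ ?_
    · exact (le_sup_left : ℱ n ≤ enlargedSigma ℱ X j n) A hA
    · have h1 : MeasurableSpace.comap (concom X j n) MeasurableSpace.pi
          ≤ enlargedSigma ℱ X j n := by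
        rw [aux_comap_concom X j n]; exact le_sup_right
      exact h1 _ ⟨S, hS, rfl⟩

theorem aux_indicator_mul (t : Set Ω) (g : Ω → ℝ) (ω : Ω) :
    t.indicator (fun _ => (1 : ℝ)) ω * g ω = t.indicator g ω := by
  by_cases h : ω ∈ t <;> simp [h]

/-- Key set-integral identity obtained from condition (iii). -/
theorem aux_iii_setIntegral
    [TopologicalSpace E] [PolishSpace E] [BorelSpace E] [Countable I]
    (P : Measure Ω) [IsProbabilityMeasure P]
    (hadapt : ∀ n i, Measurable[ℱ (n + 1)] (X n i))
    (hiii : ∀ (n : ℕ) (j : I) (τ : Ω → ℕ), IsStoppingTime ℱ (fun ω => (τ ω : WithTop ℕ)) → (∀ ω, n ≤ τ ω) →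
        Measure.map
            (fun ω => ((fun i : {i : I // i ≠ j} => X n i.1 ω), X (τ ω) j ω)) P =
          Measure.map
            (fun ω => ((fun i : {i : I // i ≠ j} => X n i.1 ω), X n j ω)) P)
    (j : I) (n k : ℕ) {f : E → ℝ} (hf : Measurable f) {C : ℝ} (hC : ∀ x, |f x| ≤ C) :
    ∀ ⦃t : Set Ω⦄, MeasurableSet[enlargedSigma ℱ X j n] t →
      ∫ ω in t, f (X n j ω) ∂P = ∫ ω in t, f (X (n + k) j ω) ∂P := by
  classical
  have hm := aux_es_le ℱ X hadapt j n
  have hintn : Integrable (fun ω => f (X n j ω)) P :=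
    aux_intbl P hf hC (aux_measX ℱ X hadapt n j)
  have hintk : Integrable (fun ω => f (X (n + k) j ω)) P :=
    aux_intbl P hf hC (aux_measX ℱ X hadapt (n + k) j)
  -- basic case
  have hbasic : ∀ t ∈ esPi ℱ X j n,
      ∫ ω in t, f (X n j ω) ∂P = ∫ ω in t, f (X (n + k) j ω) ∂P := by
    rintro _ ⟨A, S, hA, hS, rfl⟩
    have hA' : MeasurableSet A := ℱ.le n _ hA
    set τ : Ω → ℕ := fun ω => if ω ∈ A then n + k else n with hτdef
    have hst : IsStoppingTime ℱ (fun ω => (τ ω : WithTop ℕ)) := by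
      refine aux_st_of ℱ fun m => ?_
      rcases lt_or_ge m n with h1 | h1
      · have : {ω | τ ω ≤ m} = (∅ : Set Ω) := by
          ext ω; simp only [hτdef, Set.mem_setOf_eq, Set.mem_empty_iff_false, iff_false]
          by_cases h : ω ∈ A <;> simp [h] <;> omega
        rw [this]; exact @MeasurableSet.empty _ (ℱ m)
      rcases lt_or_ge m (n + k) with h2 | h2
      · have : {ω | τ ω ≤ m} = Aᶜ := by
          ext ω; simp only [hτdef, Set.mem_setOf_eq, Set.mem_compl_iff]
          by_cases h : ω ∈ A <;> simp [h] <;> omega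
        rw [this]; exact (ℱ.mono h1 _ hA).compl
      · have : {ω | τ ω ≤ m} = Set.univ := by
          ext ω; simp only [hτdef, Set.mem_setOf_eq, Set.mem_univ, iff_true]
          by_cases h : ω ∈ A <;> simp [h] <;> omega
        rw [this]; exact @MeasurableSet.univ _ (ℱ m)
    have hge : ∀ ω, n ≤ τ ω := by
      intro ω; simp only [hτdef]; by_cases h : ω ∈ A <;> simp [h]
    have hmap := hiii n j τ hst hge
    -- integrate φ p = 1_S (p.1) * f p.2 against both sides
    set φ : ({i : I // i ≠ j} → E) × E → ℝ :=
      fun p => S.indicator (fun _ => (1 : ℝ)) p.1 * f p.2 with hφdef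
    have hφ : Measurable φ :=
      ((measurable_const.indicator hS).comp measurable_fst).mul (hf.comp measurable_snd)
    have hmeasτ : Measurable τ := aux_meas_tau ℱ hst
    have hmeasXτ : Measurable (fun ω => X (τ ω) j ω) := aux_meas_Xtau ℱ X hadapt j hmeasτ
    have hYm : Measurable (concom X j n) := aux_meas_concom ℱ X hadapt j n
    have hF1 : Measurable (fun ω => ((fun i : {i : I // i ≠ j} => X n i.1 ω), X (τ ω) j ω)) :=
      hYm.prodMk hmeasXτ
    have hF2 : Measurable (fun ω => ((fun i : {i : I // i ≠ j} => X n i.1 ω), X n j ω)) :=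
      hYm.prodMk (aux_measX ℱ X hadapt n j)
    have key : ∫ ω, φ ((fun i : {i : I // i ≠ j} => X n i.1 ω), X (τ ω) j ω) ∂P
        = ∫ ω, φ ((fun i : {i : I // i ≠ j} => X n i.1 ω), X n j ω) ∂P := by
      rw [← integral_map hF1.aemeasurable hφ.aestronglyMeasurable,
        ← integral_map hF2.aemeasurable hφ.aestronglyMeasurable, hmap]
    -- split over A and Aᶜ
    have hCφ : ∀ p, |φ p| ≤ C := by
      intro p
      by_cases h : p.1 ∈ S
      · simpa [hφdef, Set.indicator_of_mem h] using hC p.2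
      · simpa [hφdef, Set.indicator_of_notMem h] using (abs_nonneg (f p.2)).trans (hC p.2)
    have hint1 : Integrable
        (fun ω => φ ((fun i : {i : I // i ≠ j} => X n i.1 ω), X (τ ω) j ω)) P :=
      aux_intbl P hφ hCφ hF1
    have hint2 : Integrable
        (fun ω => φ ((fun i : {i : I // i ≠ j} => X n i.1 ω), X n j ω)) P :=
      aux_intbl P hφ hCφ hF2
    have split1 := (integral_add_compl hA' hint1).symm
    have split2 := (integral_add_compl hA' hint2).symm
    rw [split1, split2] at key
    have eA1 : ∫ ω in A, φ ((fun i : {i : I // i ≠ j} => X n i.1 ω), X (τ ω) j ω) ∂P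
        = ∫ ω in A, φ ((fun i : {i : I // i ≠ j} => X n i.1 ω), X (n + k) j ω) ∂P := by
      refine setIntegral_congr_fun hA' fun ω hω => ?_
      simp only [hτdef, if_pos hω]
    have eAc : ∫ ω in Aᶜ, φ ((fun i : {i : I // i ≠ j} => X n i.1 ω), X (τ ω) j ω) ∂P
        = ∫ ω in Aᶜ, φ ((fun i : {i : I // i ≠ j} => X n i.1 ω), X n j ω) ∂P := by
      refine setIntegral_congr_fun hA'.compl fun ω hω => ?_
      simp only [hτdef, if_neg hω]
    rw [eA1, eAc] at key
    have key2 : ∫ ω in A, φ ((fun i : {i : I // i ≠ j} => X n i.1 ω), X (n + k) j ω) ∂P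
        = ∫ ω in A, φ ((fun i : {i : I // i ≠ j} => X n i.1 ω), X n j ω) ∂P := by
      linarith
    -- convert to set integrals over A ∩ Y⁻¹' S
    have hconv : ∀ m : ℕ,
        ∫ ω in A, φ ((fun i : {i : I // i ≠ j} => X n i.1 ω), X m j ω) ∂P
          = ∫ ω in A ∩ concom X j n ⁻¹' S, f (X m j ω) ∂P := by
      intro m
      have e1 : ∀ ω, φ ((fun i : {i : I // i ≠ j} => X n i.1 ω), X m j ω)
          = (concom X j n ⁻¹' S).indicator (fun ω => f (X m j ω)) ω := by
        intro ω
        show S.indicator (fun _ => (1 : ℝ)) (concom X j n ω) * f (X m j ω) = _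
        by_cases h : concom X j n ω ∈ S
        · rw [Set.indicator_of_mem h, Set.indicator_of_mem (Set.mem_preimage.mpr h), one_mul]
        · rw [Set.indicator_of_notMem h,
            Set.indicator_of_notMem (fun hh => h (Set.mem_preimage.mp hh)), zero_mul]
      calc ∫ ω in A, φ ((fun i : {i : I // i ≠ j} => X n i.1 ω), X m j ω) ∂P
          = ∫ ω in A, (concom X j n ⁻¹' S).indicator (fun ω => f (X m j ω)) ω ∂P := by
            exact integral_congr_ae (Eventually.of_forall fun ω => e1 ω)
        _ = ∫ ω in A ∩ concom X j n ⁻¹' S, f (X m j ω) ∂P :=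
            setIntegral_indicator (hYm hS)
    rw [hconv (n + k), hconv n] at key2
    exact key2.symm
  -- π-system induction
  refine MeasurableSpace.induction_on_inter (m := enlargedSigma ℱ X j n)
    (C := fun t _ => ∫ ω in t, f (X n j ω) ∂P = ∫ ω in t, f (X (n + k) j ω) ∂P)
    (aux_generateFrom ℱ X j n)
    (aux_isPiSystem ℱ X j n) (by simp) (fun t ht => hbasic t ht) ?_ ?_
  · intro t ht hCt
    have ht' : MeasurableSet t := hm _ ht
    have huniv := hbasic Set.univ
      ⟨Set.univ, Set.univ, MeasurableSet.univ, MeasurableSet.univ, by simp⟩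
    rw [Measure.restrict_univ] at huniv
    have e1 := integral_add_compl ht' hintn
    have e2 := integral_add_compl ht' hintk
    linarith
  · intro g hdisj hmeas hC0
    rw [integral_iUnion (fun i => hm _ (hmeas i)) hdisj hintn.integrableOn,
      integral_iUnion (fun i => hm _ (hmeas i)) hdisj hintk.integrableOn]
    exact tsum_congr hC0

end Aux

section Dir2
variable {Ω E I : Type*} {mΩ : MeasurableSpace Ω} [MeasurableSpace E]
    (ℱ : Filtration ℕ mΩ) (X : ℕ → I → Ω → E)

theorem aux_onestep (P : Measure Ω) [IsProbabilityMeasure P]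
    (hadapt : ∀ n i, Measurable[ℱ (n + 1)] (X n i))
    (hi : ∀ (j : I) (n k : ℕ) (f : E → ℝ), Measurable f → (∃ C, ∀ x, |f x| ≤ C) →
        P[(fun ω => f (X (n + k) j ω)) | enlargedSigma ℱ X j n]
          =ᵐ[P] P[(fun ω => f (X n j ω)) | enlargedSigma ℱ X j n])
    (j : I) (m : ℕ) {f : E → ℝ} (hf : Measurable f) {C : ℝ} (hC : ∀ x, |f x| ≤ C)
    {A : Set Ω} (hA : MeasurableSet[enlargedSigma ℱ X j m] A) :
    ∫ ω in A, f (X (m + 1) j ω) ∂P = ∫ ω in A, f (X m j ω) ∂P := by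
  have hm := aux_es_le ℱ X hadapt j m
  have h1 := hi j m 1 f hf ⟨C, hC⟩
  rw [← setIntegral_condExp hm (aux_intbl P hf hC (aux_measX ℱ X hadapt (m + 1) j)) hA,
      ← setIntegral_condExp hm (aux_intbl P hf hC (aux_measX ℱ X hadapt m j)) hA]
  exact integral_congr_ae (ae_restrict_of_ae h1)

theorem aux_min_meas {τ : Ω → ℕ} (hτ : Measurable τ) (M : ℕ) :
    Measurable (fun ω => min (τ ω) M) := by
  refine measurable_to_countable fun y => ?_
  exact hτ ((Set.to_countable _).measurableSet :
    MeasurableSet {t : ℕ | min t M = min (τ y) M})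

theorem aux_i_to_iii_meas
    [TopologicalSpace E] [PolishSpace E] [BorelSpace E] [Countable I]
    (P : Measure Ω) [IsProbabilityMeasure P]
    (hadapt : ∀ n i, Measurable[ℱ (n + 1)] (X n i))
    (hi : ∀ (j : I) (n k : ℕ) (f : E → ℝ), Measurable f → (∃ C, ∀ x, |f x| ≤ C) →
        P[(fun ω => f (X (n + k) j ω)) | enlargedSigma ℱ X j n]
          =ᵐ[P] P[(fun ω => f (X n j ω)) | enlargedSigma ℱ X j n])
    (n : ℕ) (j : I) {τ : Ω → ℕ} (hst : IsStoppingTime ℱ (fun ω => (τ ω : WithTop ℕ))) (hge : ∀ ω, n ≤ τ ω)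
    {S : Set ({i : I // i ≠ j} → E)} (hS : MeasurableSet S)
    {B : Set E} (hB : MeasurableSet B) :
    P (concom X j n ⁻¹' S ∩ (fun ω => X (τ ω) j ω) ⁻¹' B)
      = P (concom X j n ⁻¹' S ∩ X n j ⁻¹' B) := by
  classical
  set A₀ : Set Ω := concom X j n ⁻¹' S with hA₀def
  have hYm : Measurable (concom X j n) := aux_meas_concom ℱ X hadapt j n
  have hA₀es : MeasurableSet[enlargedSigma ℱ X j n] A₀ := by
    have h1 : MeasurableSpace.comap (concom X j n) MeasurableSpace.pi
        ≤ enlargedSigma ℱ X j n := by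
      rw [aux_comap_concom X j n]; exact le_sup_right
    exact h1 _ ⟨S, hS, rfl⟩
  set f : E → ℝ := B.indicator (fun _ => (1 : ℝ)) with hfdef
  have hfm : Measurable f := measurable_const.indicator hB
  have hfb : ∀ x, |f x| ≤ 1 := by
    intro x; by_cases h : x ∈ B
    · simp [hfdef, Set.indicator_of_mem h]
    · simp [hfdef, Set.indicator_of_notMem h]
  have hmeasτ : Measurable τ := aux_meas_tau ℱ hst
  have hZτ : Measurable (fun ω => X (τ ω) j ω) := aux_meas_Xtau ℱ X hadapt j hmeasτ
  have hZM : ∀ M : ℕ, Measurable (fun ω => X (min (τ ω) M) j ω) := fun M =>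
    aux_meas_Xtau ℱ X hadapt j (aux_min_meas hmeasτ M)
  -- step 1 : T M is constant for M ≥ n
  have claim1 : ∀ M : ℕ, n ≤ M →
      ∫ ω in A₀, f (X (min (τ ω) M) j ω) ∂P = ∫ ω in A₀, f (X n j ω) ∂P := by
    intro M hM
    induction M, hM using Nat.le_induction with
    | base =>
      refine integral_congr_ae (Eventually.of_forall fun ω => ?_)
      show f (X (min (τ ω) n) j ω) = f (X n j ω)
      rw [min_eq_right (hge ω)]
    | succ M hM ih =>
      have hτM : MeasurableSet {ω | τ ω ≤ M} := ℱ.le M _ (aux_st_le ℱ hst M)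
      have hint1 : Integrable (fun ω => f (X (min (τ ω) (M + 1)) j ω)) P :=
        aux_intbl P hfm hfb (hZM (M + 1))
      have hint2 : Integrable (fun ω => f (X (min (τ ω) M) j ω)) P :=
        aux_intbl P hfm hfb (hZM M)
      have splitA : ∀ (g : Ω → ℝ), Integrable g P →
          ∫ ω in A₀, g ω ∂P
            = ∫ ω in {ω | τ ω ≤ M}, g ω ∂(P.restrict A₀)
              + ∫ ω in {ω | τ ω ≤ M}ᶜ, g ω ∂(P.restrict A₀) :=
        fun g hg => (integral_add_compl hτM (hg.restrict)).symm
      rw [splitA _ hint1, splitA _ hint2] at *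
      have e1 : ∫ ω in {ω | τ ω ≤ M}, f (X (min (τ ω) (M + 1)) j ω) ∂(P.restrict A₀)
          = ∫ ω in {ω | τ ω ≤ M}, f (X (min (τ ω) M) j ω) ∂(P.restrict A₀) := by
        refine setIntegral_congr_fun hτM fun ω hω => ?_
        have : τ ω ≤ M := hω
        rw [min_eq_left (by omega), min_eq_left this]
      have e2 : ∫ ω in {ω | τ ω ≤ M}ᶜ, f (X (min (τ ω) (M + 1)) j ω) ∂(P.restrict A₀)
          = ∫ ω in {ω | τ ω ≤ M}ᶜ, f (X (min (τ ω) M) j ω) ∂(P.restrict A₀) := by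
        have hA₀m : MeasurableSet A₀ := hYm hS
        rw [Measure.restrict_restrict hτM.compl]
        have eL : ∫ ω in {ω | τ ω ≤ M}ᶜ ∩ A₀, f (X (min (τ ω) (M + 1)) j ω) ∂P
            = ∫ ω in {ω | τ ω ≤ M}ᶜ ∩ A₀, f (X (M + 1) j ω) ∂P := by
          refine setIntegral_congr_fun (hτM.compl.inter hA₀m) fun ω hω => ?_
          have : ¬ τ ω ≤ M := hω.1
          rw [min_eq_right (by omega)]
        have eR : ∫ ω in {ω | τ ω ≤ M}ᶜ ∩ A₀, f (X (min (τ ω) M) j ω) ∂P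
            = ∫ ω in {ω | τ ω ≤ M}ᶜ ∩ A₀, f (X M j ω) ∂P := by
          refine setIntegral_congr_fun (hτM.compl.inter hA₀m) fun ω hω => ?_
          have : ¬ τ ω ≤ M := hω.1
          rw [min_eq_right (by omega)]
        rw [eL, eR]
        refine aux_onestep ℱ X P hadapt hi j M hfm hfb ?_
        exact MeasurableSet.inter ((le_sup_left : ℱ M ≤ _) _ (aux_st_le ℱ hst M).compl)
          (aux_es_mono ℱ X hadapt j hM A₀ hA₀es)
      rw [e1, e2]
      exact ih
  -- step 2 : dominated convergence
  have claim2 : Tendsto (fun M => ∫ ω in A₀, f (X (min (τ ω) M) j ω) ∂P) atTop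
      (𝓝 (∫ ω in A₀, f (X (τ ω) j ω) ∂P)) := by
    refine tendsto_integral_of_dominated_convergence (fun _ => (1 : ℝ))
      (fun M => ((hfm.comp (hZM M)).aestronglyMeasurable).restrict)
      (integrable_const 1) (fun M => Eventually.of_forall fun ω => ?_)
      (Eventually.of_forall fun ω => ?_)
    · simpa [Real.norm_eq_abs] using hfb (X (min (τ ω) M) j ω)
    · refine Tendsto.congr' ?_ tendsto_const_nhds
      filter_upwards [eventually_ge_atTop (τ ω)] with M hM
      rw [min_eq_left hM]
  have claim3 : ∫ ω in A₀, f (X (τ ω) j ω) ∂P = ∫ ω in A₀, f (X n j ω) ∂P := by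
    refine tendsto_nhds_unique claim2 ?_
    refine Tendsto.congr' ?_ (tendsto_const_nhds)
    filter_upwards [eventually_ge_atTop n] with M hM
    exact (claim1 M hM).symm
  -- step 3 : convert set integrals of indicators to measures
  have hconv : ∀ (Z : Ω → E), Measurable Z →
      ∫ ω in A₀, f (Z ω) ∂P = (P (A₀ ∩ Z ⁻¹' B)).toReal := by
    intro Z hZ
    have e1 : ∀ ω, f (Z ω) = (Z ⁻¹' B).indicator (fun _ => (1 : ℝ)) ω := by
      intro ω; by_cases h : Z ω ∈ B
      · rw [hfdef, Set.indicator_of_mem h, Set.indicator_of_mem (Set.mem_preimage.mpr h)]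
      · rw [hfdef, Set.indicator_of_notMem h,
          Set.indicator_of_notMem (fun hh => h (Set.mem_preimage.mp hh))]
    rw [integral_congr_ae (Eventually.of_forall e1), setIntegral_indicator (hZ hB),
      setIntegral_const]
    simp
    rfl
  rw [hconv _ hZτ, hconv _ (aux_measX ℱ X hadapt n j)] at claim3
  exact (ENNReal.toReal_eq_toReal_iff' (measure_ne_top P _) (measure_ne_top P _)).mp claim3

end Dir2


/-- Equivalent characterizations of partially c.i.d. processes:
(i) for every `j`, `(X_{n,j})` is c.i.d. with respect to the enlarged filtration `G^j`;
(ii) for every `j` and bounded measurable `f`, `(E[f(X_{n+1,j}) | G_n^j])_n` is a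
martingale with respect to `G^j` (stated through the one-step tower property);
(iii) for every `n`, `j`, and finite stopping time `τ ≥ n`,
`(X_{n+1}^{I\{j}}, X_{τ+1,j}) =_d (X_{n+1}^{I\{j}}, X_{n+1,j})`. -/
theorem pcid_equivalences
    {Ω E I : Type*} {mΩ : MeasurableSpace Ω} [MeasurableSpace E]
    [TopologicalSpace E] [PolishSpace E] [BorelSpace E] [Countable I]
    (P : Measure Ω) [IsProbabilityMeasure P]
    (ℱ : Filtration ℕ mΩ)
    (X : ℕ → I → Ω → E) (hadapt : ∀ n i, Measurable[ℱ (n + 1)] (X n i)) :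
    ((∀ (j : I) (n k : ℕ) (f : E → ℝ), Measurable f → (∃ C, ∀ x, |f x| ≤ C) →
        P[(fun ω => f (X (n + k) j ω)) | enlargedSigma ℱ X j n]
          =ᵐ[P] P[(fun ω => f (X n j ω)) | enlargedSigma ℱ X j n]) ↔
      (∀ (j : I) (f : E → ℝ), Measurable f → (∃ C, ∀ x, |f x| ≤ C) → ∀ n : ℕ,
        P[(P[(fun ω => f (X (n + 1) j ω)) | enlargedSigma ℱ X j (n + 1)]) |
            enlargedSigma ℱ X j n]
          =ᵐ[P] P[(fun ω => f (X n j ω)) | enlargedSigma ℱ X j n])) ∧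
    ((∀ (j : I) (n k : ℕ) (f : E → ℝ), Measurable f → (∃ C, ∀ x, |f x| ≤ C) →
        P[(fun ω => f (X (n + k) j ω)) | enlargedSigma ℱ X j n]
          =ᵐ[P] P[(fun ω => f (X n j ω)) | enlargedSigma ℱ X j n]) ↔
      (∀ (n : ℕ) (j : I) (τ : Ω → ℕ), IsStoppingTime ℱ (fun ω => (τ ω : WithTop ℕ)) → (∀ ω, n ≤ τ ω) →
        Measure.map
            (fun ω => ((fun i : {i : I // i ≠ j} => X n i.1 ω), X (τ ω) j ω)) P =
          Measure.map
            (fun ω => ((fun i : {i : I // i ≠ j} => X n i.1 ω), X n j ω)) P)) := by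
  constructor
  · -- (i) ↔ (ii)
    constructor
    · intro h j f hf hbd n
      exact (condExp_condExp_of_le (aux_es_mono ℱ X hadapt j n.le_succ)
        (aux_es_le ℱ X hadapt j (n + 1))).trans (h j n 1 f hf hbd)
    · intro h j n k f hf hbd
      induction k generalizing n with
      | zero => simp
      | succ k ih =>
        have hnk : n + (k + 1) = (n + 1) + k := by omega
        rw [hnk]
        calc P[(fun ω => f (X ((n + 1) + k) j ω)) | enlargedSigma ℱ X j n]
            =ᵐ[P] P[(P[(fun ω => f (X ((n + 1) + k) j ω)) |
                enlargedSigma ℱ X j (n + 1)]) | enlargedSigma ℱ X j n] :=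
              (condExp_condExp_of_le (aux_es_mono ℱ X hadapt j n.le_succ)
                (aux_es_le ℱ X hadapt j (n + 1))).symm
          _ =ᵐ[P] P[(P[(fun ω => f (X (n + 1) j ω)) |
                enlargedSigma ℱ X j (n + 1)]) | enlargedSigma ℱ X j n] :=
              condExp_congr_ae (ih (n + 1))
          _ =ᵐ[P] P[(fun ω => f (X n j ω)) | enlargedSigma ℱ X j n] := h j f hf hbd n
  · -- (i) ↔ (iii)
    constructor
    · intro h n j τ hst hge
      have hYm : Measurable (concom X j n) := aux_meas_concom ℱ X hadapt j n
      have hZτ : Measurable (fun ω => X (τ ω) j ω) :=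
        aux_meas_Xtau ℱ X hadapt j (aux_meas_tau ℱ hst)
      have hF1 : Measurable
          (fun ω => ((fun i : {i : I // i ≠ j} => X n i.1 ω), X (τ ω) j ω)) :=
        hYm.prodMk hZτ
      have hF2 : Measurable
          (fun ω => ((fun i : {i : I // i ≠ j} => X n i.1 ω), X n j ω)) :=
        hYm.prodMk (aux_measX ℱ X hadapt n j)
      refine ext_of_generate_finite _ generateFrom_prod.symm isPiSystem_prod ?_ ?_
      · rintro _ ⟨S, hS, B, hB, rfl⟩
        have hS' : MeasurableSet S := hS
        have hB' : MeasurableSet B := hB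
        rw [Measure.map_apply hF1 (hS'.prod hB'), Measure.map_apply hF2 (hS'.prod hB'),
          Set.mk_preimage_prod, Set.mk_preimage_prod]
        exact aux_i_to_iii_meas ℱ X P hadapt h n j hst hge hS' hB'
      · rw [Measure.map_apply hF1 MeasurableSet.univ,
          Measure.map_apply hF2 MeasurableSet.univ, Set.preimage_univ, Set.preimage_univ]
    · intro h j n k f hf hbd
      obtain ⟨C, hC⟩ := hbd
      have hm := aux_es_le ℱ X hadapt j n
      refine (ae_eq_condExp_of_forall_setIntegral_eq hm
        (aux_intbl P hf hC (aux_measX ℱ X hadapt (n + k) j))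
        (fun s _ _ => integrable_condExp.integrableOn) (fun s hs _ => ?_)
        (StronglyMeasurable.aestronglyMeasurable stronglyMeasurable_condExp)).symm
      rw [setIntegral_condExp hm (aux_intbl P hf hC (aux_measX ℱ X hadapt n j)) hs]
      exact aux_iii_setIntegral ℱ X P hadapt h j n k hf hC hs
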